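/- In the stochastic tabular setting, if a policy π* maximizes R̄ over all policies (i.e., R̄(π) ≤ R̄(π*) for every policy π), then π* is constrained within the support of the behavior policy at every state in the support of d: for every s with d(s) > 0 and every action a, π*(a|s) > 0 implies β(a|s) > 0. -/

import Mathlib

open scoped BigOperators Classical

/-- Extended-real logarithm of a (nonnegative) real number, with `elog 0 = ⊥` (i.e. `log 0 = -∞`).
Note that in `EReal` we have `0 * ⊥ = 0`, matching the convention `0·(−∞) = 0`. -/
noncomputable def elog (x : ℝ) : EReal := if x = 0 then ⊥ else ((Real.log x : ℝ) : EReal)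

/-- The regularizer
`R̄(π) = Σ_s d(s)·Σ_{s'} N(s'|s)·(exp(α V(s'))/Z(s))·log(Σ_a M(s'|s,a)·π(a|s))`,
valued in the extended reals. -/
noncomputable def RbarSto {S A : Type*} [Fintype S] [Fintype A]
    (d : S → ℝ) (N : S → S → ℝ) (V : S → ℝ) (α : ℝ) (Z : S → ℝ)
    (M : S → A → S → ℝ) (π : S → A → ℝ) : EReal :=
  ∑ s, (d s : EReal) *
    ∑ s', ((N s s' * (Real.exp (α * V s') / Z s) : ℝ) : EReal) *
      elog (∑ a, M s a s' * π s a)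

lemma elog_of_pos {x : ℝ} (hx : 0 < x) : elog x = ((Real.log x : ℝ) : EReal) := by
  simp [elog, ne_of_gt hx]

lemma elog_zero : elog 0 = ⊥ := by simp [elog]

lemma ecoe_sum {ι : Type*} (s : Finset ι) (f : ι → ℝ) :
    ((∑ i ∈ s, f i : ℝ) : EReal) = ∑ i ∈ s, ((f i : ℝ) : EReal) := by
  classical
  induction s using Finset.induction with
  | empty => simp
  | insert _ _ h ih => rw [Finset.sum_insert h, Finset.sum_insert h, EReal.coe_add, ih]

lemma esum_eq_bot {ι : Type*} (s : Finset ι) (f : ι → EReal) {i : ι}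
    (hi : i ∈ s) (h : f i = ⊥) : ∑ j ∈ s, f j = ⊥ := by
  classical
  rw [← Finset.add_sum_erase s f hi, h, EReal.bot_add]

/-- Under positivity of the `log` arguments wherever the weight is positive, `RbarSto`
is the coercion of the corresponding real sum. -/
lemma Rbar_coe {S A : Type*} [Fintype S] [Fintype A]
    (d : S → ℝ) (N : S → S → ℝ) (V : S → ℝ) (α : ℝ) (Z : S → ℝ)
    (M : S → A → S → ℝ) (π : S → A → ℝ)
    (hd0 : ∀ s, 0 ≤ d s)
    (hw : ∀ s s', 0 ≤ N s s' * (Real.exp (α * V s') / Z s))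
    (hP : ∀ s s', 0 < d s → 0 < N s s' * (Real.exp (α * V s') / Z s) →
      0 < ∑ a, M s a s' * π s a) :
    RbarSto d N V α Z M π =
      ((∑ s, d s * ∑ s', (N s s' * (Real.exp (α * V s') / Z s)) *
        Real.log (∑ a, M s a s' * π s a) : ℝ) : EReal) := by
  rw [RbarSto, ecoe_sum]
  refine Finset.sum_congr rfl fun s _ => ?_
  rcases eq_or_lt_of_le (hd0 s) with hds | hds
  · rw [← hds]; simp
  · rw [EReal.coe_mul, ecoe_sum]
    congr 1
    refine Finset.sum_congr rfl fun s' _ => ?_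
    rcases eq_or_lt_of_le (hw s s') with hw0 | hw0
    · rw [← hw0]; simp
    · rw [elog_of_pos (hP s s' hds hw0)]
      exact (EReal.coe_mul _ _).symm

/-- in the stochastic tabular setting, any policy maximizing `R̄` over all
policies is constrained within the support of the behavior policy at every state in the
support of `d`. -/
theorem stmt16 {S A : Type*} [Fintype S] [Fintype A] [Nonempty S] [Nonempty A]
    (d : S → ℝ) (hd0 : ∀ s, 0 ≤ d s) (hd1 : ∑ s, d s = 1)
    (β : S → A → ℝ) (hβ0 : ∀ s a, 0 ≤ β s a) (hβ1 : ∀ s, ∑ a, β s a = 1)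
    (M : S → A → S → ℝ) (hM0 : ∀ s a s', 0 ≤ M s a s')
    (hMzero : ∀ s a, β s a = 0 → ∀ s', M s a s' = 0)
    (hMpmf : ∀ s a, 0 < β s a → ∑ s', M s a s' = 1)
    (N : S → S → ℝ) (hN : ∀ s s', N s s' = ∑ a, β s a * M s a s')
    (V : S → ℝ) (α : ℝ)
    (Z : S → ℝ) (hZ : ∀ s, Z s = ∑ s', Real.exp (α * V s') * N s s')
    (πst : S → A → ℝ) (hπst0 : ∀ s a, 0 ≤ πst s a) (hπst1 : ∀ s, ∑ a, πst s a = 1)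
    (hmax : ∀ π : S → A → ℝ, (∀ s a, 0 ≤ π s a) → (∀ s, ∑ a, π s a = 1) →
      RbarSto d N V α Z M π ≤ RbarSto d N V α Z M πst) :
    ∀ s, 0 < d s → ∀ a, 0 < πst s a → 0 < β s a := by
  classical
  intro s0 hds0 a0 hπa0
  by_contra hβa0'
  have hβa0 : β s0 a0 = 0 := le_antisymm (not_lt.mp hβa0') (hβ0 s0 a0)
  -- basic nonnegativity
  have hNnn : ∀ s s', 0 ≤ N s s' := fun s s' => by
    rw [hN]
    exact Finset.sum_nonneg fun a _ => mul_nonneg (hβ0 s a) (hM0 s a s')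
  have hZnn : ∀ s, 0 ≤ Z s := fun s => by
    rw [hZ]
    exact Finset.sum_nonneg fun s' _ => mul_nonneg (Real.exp_pos _).le (hNnn s s')
  have hw : ∀ s s', 0 ≤ N s s' * (Real.exp (α * V s') / Z s) := fun s s' =>
    mul_nonneg (hNnn s s') (div_nonneg (Real.exp_pos _).le (hZnn s))
  -- choose b0 with β s0 b0 > 0
  obtain ⟨b0, hb0⟩ : ∃ b, 0 < β s0 b := by
    by_contra h
    push_neg at h
    have : ∑ a, β s0 a = 0 :=
      Finset.sum_eq_zero fun a _ => le_antisymm (h a) (hβ0 s0 a)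
    rw [hβ1 s0] at this; norm_num at this
  have hb0a0 : b0 ≠ a0 := by
    intro h; rw [h, hβa0] at hb0; exact lt_irrefl _ hb0
  -- choose s1 with M s0 b0 s1 > 0
  obtain ⟨s1, hs1⟩ : ∃ s', 0 < M s0 b0 s' := by
    by_contra h
    push_neg at h
    have : ∑ s', M s0 b0 s' = 0 :=
      Finset.sum_eq_zero fun s' _ => le_antisymm (h s') (hM0 s0 b0 s')
    rw [hMpmf s0 b0 hb0] at this; norm_num at this
  have hN1 : 0 < N s0 s1 := by
    rw [hN]
    calc (0:ℝ) < β s0 b0 * M s0 b0 s1 := mul_pos hb0 hs1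
      _ ≤ ∑ a, β s0 a * M s0 a s1 :=
        Finset.single_le_sum (fun a _ => mul_nonneg (hβ0 s0 a) (hM0 s0 a s1))
          (Finset.mem_univ b0)
  have hZ1 : 0 < Z s0 := by
    rw [hZ]
    calc (0:ℝ) < Real.exp (α * V s1) * N s0 s1 := mul_pos (Real.exp_pos _) hN1
      _ ≤ ∑ s', Real.exp (α * V s') * N s0 s' :=
        Finset.single_le_sum (f := fun s' => Real.exp (α * V s') * N s0 s')
          (fun s' _ => mul_nonneg (Real.exp_pos _).le (hNnn s0 s')) (Finset.mem_univ s1)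
  have hw1 : 0 < N s0 s1 * (Real.exp (α * V s1) / Z s0) :=
    mul_pos hN1 (div_pos (Real.exp_pos _) hZ1)
  -- R̄(β) is a real number
  have hPβ : ∀ s s', 0 < d s → 0 < N s s' * (Real.exp (α * V s') / Z s) →
      0 < ∑ a, M s a s' * β s a := by
    intro s s' _ hwp
    have hNp : 0 < N s s' := by
      rcases eq_or_lt_of_le (hNnn s s') with h | h
      · rw [← h, zero_mul] at hwp; exact absurd hwp (lt_irrefl 0)
      · exact h
    have : ∑ a, M s a s' * β s a = N s s' := by
      rw [hN]; exact Finset.sum_congr rfl fun a _ => mul_comm _ _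
    rw [this]; exact hNp
  have hRβ := Rbar_coe d N V α Z M β hd0 hw hPβ
  have hβle := hmax β hβ0 hβ1
  have hRst_ne_bot : RbarSto d N V α Z M πst ≠ ⊥ := by
    intro h
    rw [h, le_bot_iff, hRβ] at hβle
    exact EReal.coe_ne_bot _ hβle
  -- positivity for πst
  have hPst : ∀ s s', 0 < d s → 0 < N s s' * (Real.exp (α * V s') / Z s) →
      0 < ∑ a, M s a s' * πst s a := by
    intro s s' hds hwp
    by_contra hx
    have hx0 : ∑ a, M s a s' * πst s a = 0 :=
      le_antisymm (not_lt.mp hx)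
        (Finset.sum_nonneg fun a _ => mul_nonneg (hM0 s a s') (hπst0 s a))
    have hterm : ((N s s' * (Real.exp (α * V s') / Z s) : ℝ) : EReal) *
        elog (∑ a, M s a s' * πst s a) = ⊥ := by
      rw [hx0, elog_zero, EReal.coe_mul_bot_of_pos hwp]
    have hinner : (∑ s'', ((N s s'' * (Real.exp (α * V s'') / Z s) : ℝ) : EReal) *
        elog (∑ a, M s a s'' * πst s a)) = ⊥ :=
      esum_eq_bot _ _ (Finset.mem_univ s') hterm
    apply hRst_ne_bot
    rw [RbarSto]
    refine esum_eq_bot _ _ (Finset.mem_univ s) ?_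
    rw [hinner, EReal.coe_mul_bot_of_pos hds]
  -- the modified policy
  set π' : S → A → ℝ := fun s a =>
    if s = s0 then (if a = a0 then 0 else if a = b0 then πst s0 b0 + πst s0 a0
      else πst s0 a) else πst s a with hπ'
  have hπ'0 : ∀ s a, 0 ≤ π' s a := by
    intro s a
    simp only [hπ']
    split_ifs with h1 h2 h3
    · exact le_refl 0
    · exact add_nonneg (hπst0 s0 b0) (hπst0 s0 a0)
    · exact hπst0 s0 a
    · exact hπst0 s a
  -- splitting helper
  have hsplit : ∀ g : A → ℝ, ∑ a, g a =
      g a0 + (g b0 + ∑ a ∈ (Finset.univ.erase a0).erase b0, g a) := by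
    intro g
    rw [Finset.add_sum_erase _ g (by simp [hb0a0] : b0 ∈ Finset.univ.erase a0),
      Finset.add_sum_erase _ g (Finset.mem_univ a0)]
  have hmem : ∀ a ∈ (Finset.univ.erase a0).erase b0, a ≠ a0 ∧ a ≠ b0 := by
    intro a ha
    exact ⟨Finset.ne_of_mem_erase (Finset.mem_of_mem_erase ha), Finset.ne_of_mem_erase ha⟩
  have hπ'1 : ∀ s, ∑ a, π' s a = 1 := by
    intro s
    by_cases hs : s = s0
    · rw [hs, hsplit (fun a => π' s0 a), ← hπst1 s0, hsplit (fun a => πst s0 a)]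
      have hrest : ∑ a ∈ (Finset.univ.erase a0).erase b0, π' s0 a =
          ∑ a ∈ (Finset.univ.erase a0).erase b0, πst s0 a := by
        refine Finset.sum_congr rfl fun a ha => ?_
        obtain ⟨h1, h2⟩ := hmem a ha
        simp [hπ', h1, h2]
      have e1 : π' s0 a0 = 0 := by simp [hπ']
      have e2 : π' s0 b0 = πst s0 b0 + πst s0 a0 := by simp [hπ', hb0a0]
      rw [hrest, e1, e2]
      ring
    · rw [← hπst1 s]
      refine Finset.sum_congr rfl fun a _ => ?_
      simp [hπ', hs]
  -- the log arguments for π'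
  have hMa0 : ∀ s', M s0 a0 s' = 0 := hMzero s0 a0 hβa0
  have hx' : ∀ s', ∑ a, M s0 a s' * π' s0 a =
      (∑ a, M s0 a s' * πst s0 a) + M s0 b0 s' * πst s0 a0 := by
    intro s'
    rw [hsplit (fun a => M s0 a s' * π' s0 a), hsplit (fun a => M s0 a s' * πst s0 a)]
    have hrest : ∑ a ∈ (Finset.univ.erase a0).erase b0, M s0 a s' * π' s0 a =
        ∑ a ∈ (Finset.univ.erase a0).erase b0, M s0 a s' * πst s0 a := by
      refine Finset.sum_congr rfl fun a ha => ?_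
      obtain ⟨h1, h2⟩ := hmem a ha
      simp [hπ', h1, h2]
    have e1 : π' s0 a0 = 0 := by simp [hπ']
    have e2 : π' s0 b0 = πst s0 b0 + πst s0 a0 := by simp [hπ', hb0a0]
    rw [hrest, e1, e2, hMa0 s']
    ring
  have hxeq : ∀ s, s ≠ s0 → ∀ s', ∑ a, M s a s' * π' s a = ∑ a, M s a s' * πst s a := by
    intro s hs s'
    refine Finset.sum_congr rfl fun a _ => ?_
    simp [hπ', hs]
  have hP' : ∀ s s', 0 < d s → 0 < N s s' * (Real.exp (α * V s') / Z s) →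
      0 < ∑ a, M s a s' * π' s a := by
    intro s s' hds hwp
    by_cases hs : s = s0
    · rw [hs] at hwp ⊢
      rw [hx' s']
      have := hPst s0 s' hds0 hwp
      have hnn : 0 ≤ M s0 b0 s' * πst s0 a0 := mul_nonneg (hM0 _ _ _) (hπst0 _ _)
      linarith
    · rw [hxeq s hs s']; exact hPst s s' hds hwp
  -- convert both to reals
  have hRst := Rbar_coe d N V α Z M πst hd0 hw hPst
  have hR' := Rbar_coe d N V α Z M π' hd0 hw hP'
  have hle := hmax π' hπ'0 hπ'1
  rw [hRst, hR', EReal.coe_le_coe_iff] at hle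
  -- strict inequality in ℝ
  have hstrict :
      (∑ s, d s * ∑ s', (N s s' * (Real.exp (α * V s') / Z s)) *
        Real.log (∑ a, M s a s' * πst s a)) <
      (∑ s, d s * ∑ s', (N s s' * (Real.exp (α * V s') / Z s)) *
        Real.log (∑ a, M s a s' * π' s a)) := by
    refine Finset.sum_lt_sum ?_ ⟨s0, Finset.mem_univ s0, ?_⟩
    · intro s _
      by_cases hs : s = s0
      · rw [hs]
        refine mul_le_mul_of_nonneg_left (Finset.sum_le_sum fun s' _ => ?_) (hd0 s0)
        rcases eq_or_lt_of_le (hw s0 s') with hw0 | hw0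
        · rw [← hw0, zero_mul, zero_mul]
        · refine mul_le_mul_of_nonneg_left ?_ (hw s0 s')
          have hx0 := hPst s0 s' hds0 hw0
          rw [hx' s']
          refine Real.log_le_log hx0 ?_
          have : 0 ≤ M s0 b0 s' * πst s0 a0 := mul_nonneg (hM0 _ _ _) (hπst0 _ _)
          linarith
      · have h := hxeq s hs
        simp only [h]
        exact le_rfl
    · refine mul_lt_mul_of_pos_left ?_ hds0
      refine Finset.sum_lt_sum ?_ ⟨s1, Finset.mem_univ s1, ?_⟩
      · intro s' _
        rcases eq_or_lt_of_le (hw s0 s') with hw0 | hw0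
        · rw [← hw0, zero_mul, zero_mul]
        · refine mul_le_mul_of_nonneg_left ?_ (hw s0 s')
          have hx0 := hPst s0 s' hds0 hw0
          rw [hx' s']
          refine Real.log_le_log hx0 ?_
          have : 0 ≤ M s0 b0 s' * πst s0 a0 := mul_nonneg (hM0 _ _ _) (hπst0 _ _)
          linarith
      · refine mul_lt_mul_of_pos_left ?_ hw1
        have hx0 := hPst s0 s1 hds0 hw1
        rw [hx' s1]
        refine Real.log_lt_log hx0 ?_
        have : 0 < M s0 b0 s1 * πst s0 a0 := mul_pos hs1 hπa0
        linarith
  linarith
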